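/- If a biquadratic tensor T is diagonal with respect to its second and fourth indices (t_{ijpq} = 0 whenever j ≠ q), then the spectral norm of T equals max_j ρ((t_{ijpj})_{i,p}), the maximum over j of the spectral radii of the symmetric slice matrices. -/
import Mathlib

noncomputable section

/-- A fourth order tensor `T` of size `d1 × d2 × d1 × d2` is biquadratic. -/
def Biquadratic {d1 d2 : ℕ} (T : Fin d1 → Fin d2 → Fin d1 → Fin d2 → ℝ) : Prop :=
  ∀ i j p q, T i j p q = T p j i q ∧ T i j p q = T p q i j

/-- `⟨T, x ⊗ y ⊗ x ⊗ y⟩`. -/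
def bform {d1 d2 : ℕ} (T : Fin d1 → Fin d2 → Fin d1 → Fin d2 → ℝ)
    (x : Fin d1 → ℝ) (y : Fin d2 → ℝ) : ℝ :=
  ∑ i, ∑ j, ∑ p, ∑ q, T i j p q * x i * y j * x p * y q

/-- The spectral norm of a fourth order tensor. -/
noncomputable def bSpec {d1 d2 : ℕ} (T : Fin d1 → Fin d2 → Fin d1 → Fin d2 → ℝ) : ℝ :=
  sSup { r : ℝ | ∃ x : Fin d1 → ℝ, ∃ y : Fin d2 → ℝ,
    (∑ i, x i ^ 2 = 1) ∧ (∑ j, y j ^ 2 = 1) ∧ r = |bform T x y| }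

/-- Spectral radius of a symmetric matrix, as the maximum of `|sᵀ M s|` over unit vectors. -/
noncomputable def raySup {n : Type*} [Fintype n] (M : Matrix n n ℝ) : ℝ :=
  sSup { r : ℝ | ∃ s : n → ℝ, (∑ i, s i ^ 2 = 1) ∧ r = |∑ i, ∑ j, M i j * s i * s j| }

lemma aux_single_unit {n : ℕ} (j : Fin n) :
    ∑ i, (Pi.single j 1 : Fin n → ℝ) i ^ 2 = 1 := by
  simp [Pi.single_apply, ite_pow, Finset.sum_ite_eq']

lemma aux_abs_le_one {n : ℕ} {x : Fin n → ℝ} (hx : ∑ i, x i ^ 2 = 1) (i : Fin n) : |x i| ≤ 1 := by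
  have h1 : x i ^ 2 ≤ 1 := hx ▸ Finset.single_le_sum (fun j _ => sq_nonneg (x j)) (Finset.mem_univ i)
  exact abs_le_one_iff_mul_self_le_one.mpr (by nlinarith)

lemma aux_decomp {d1 d2 : ℕ} (T : Fin d1 → Fin d2 → Fin d1 → Fin d2 → ℝ)
    (hdiag : ∀ i j p q, j ≠ q → T i j p q = 0) (x : Fin d1 → ℝ) (y : Fin d2 → ℝ) :
    bform T x y = ∑ j, y j ^ 2 * ∑ i, ∑ p, T i j p j * x i * x p := by
  unfold bform
  have h1 : ∀ i j p, ∑ q, T i j p q * x i * y j * x p * y q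
      = T i j p j * x i * y j * x p * y j := by
    intro i j p
    rw [Finset.sum_eq_single j]
    · intro q _ hq; rw [hdiag i j p q (Ne.symm hq)]; ring
    · intro h; exact absurd (Finset.mem_univ j) h
  simp_rw [h1]
  rw [Finset.sum_comm]
  refine Finset.sum_congr rfl fun j _ => ?_
  rw [Finset.mul_sum]
  refine Finset.sum_congr rfl fun i _ => ?_
  rw [Finset.mul_sum]
  refine Finset.sum_congr rfl fun p _ => ?_
  ring

lemma aux_bddA {d1 d2 : ℕ} (T : Fin d1 → Fin d2 → Fin d1 → Fin d2 → ℝ) :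
    BddAbove { r : ℝ | ∃ x : Fin d1 → ℝ, ∃ y : Fin d2 → ℝ,
      (∑ i, x i ^ 2 = 1) ∧ (∑ j, y j ^ 2 = 1) ∧ r = |bform T x y| } := by
  refine ⟨∑ i, ∑ j, ∑ p, ∑ q, |T i j p q|, ?_⟩
  rintro r ⟨x, y, hx, hy, rfl⟩
  unfold bform
  refine (Finset.abs_sum_le_sum_abs _ _).trans (Finset.sum_le_sum fun i _ => ?_)
  refine (Finset.abs_sum_le_sum_abs _ _).trans (Finset.sum_le_sum fun j _ => ?_)
  refine (Finset.abs_sum_le_sum_abs _ _).trans (Finset.sum_le_sum fun p _ => ?_)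
  refine (Finset.abs_sum_le_sum_abs _ _).trans (Finset.sum_le_sum fun q _ => ?_)
  calc |T i j p q * x i * y j * x p * y q|
      = |T i j p q| * |x i| * |y j| * |x p| * |y q| := by
        rw [abs_mul, abs_mul, abs_mul, abs_mul]
    _ ≤ |T i j p q| * 1 * 1 * 1 * 1 := by
        gcongr <;> first
          | exact aux_abs_le_one hx _
          | exact aux_abs_le_one hy _
    _ = |T i j p q| := by ring

lemma aux_bddR {n : ℕ} (M : Matrix (Fin n) (Fin n) ℝ) :
    BddAbove {r : ℝ | ∃ s : Fin n → ℝ, (∑ i, s i ^ 2 = 1) ∧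
      r = |∑ i, ∑ j, M i j * s i * s j|} := by
  refine ⟨∑ i, ∑ j, |M i j|, ?_⟩
  rintro r ⟨s, hs, rfl⟩
  refine (Finset.abs_sum_le_sum_abs _ _).trans (Finset.sum_le_sum fun i _ => ?_)
  refine (Finset.abs_sum_le_sum_abs _ _).trans (Finset.sum_le_sum fun j _ => ?_)
  calc |M i j * s i * s j| = |M i j| * |s i| * |s j| := by rw [abs_mul, abs_mul]
    _ ≤ |M i j| * 1 * 1 := by gcongr <;> exact aux_abs_le_one hs _
    _ = |M i j| := by ring

theorem stmt17 {d1 d2 : ℕ} (T : Fin d1 → Fin d2 → Fin d1 → Fin d2 → ℝ)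
    (hT : Biquadratic T) (hdiag : ∀ i j p q, j ≠ q → T i j p q = 0) :
    bSpec T = sSup { r : ℝ | ∃ j : Fin d2, r = raySup (Matrix.of fun i p => T i j p j) } := by
  classical
  set M : Fin d2 → Matrix (Fin d1) (Fin d1) ℝ := fun j => Matrix.of fun i p => T i j p j with hM
  set Q : Fin d2 → (Fin d1 → ℝ) → ℝ := fun j x => ∑ i, ∑ p, T i j p j * x i * x p with hQ
  have hMip : ∀ j i p, M j i p = T i j p j := fun j i p => rfl
  -- the raySup set of M j, in terms of Q
  have hray : ∀ j : Fin d2, raySup (M j) =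
      sSup {r : ℝ | ∃ s : Fin d1 → ℝ, (∑ i, s i ^ 2 = 1) ∧ r = |Q j s|} := fun j => rfl
  rcases Nat.eq_zero_or_pos d2 with h2 | h2
  · subst h2
    have hA : { r : ℝ | ∃ x : Fin d1 → ℝ, ∃ y : Fin 0 → ℝ,
        (∑ i, x i ^ 2 = 1) ∧ (∑ j, y j ^ 2 = 1) ∧ r = |bform T x y| } = ∅ := by
      ext r; simp
    have hB : { r : ℝ | ∃ j : Fin 0, r = raySup (Matrix.of fun i p => T i j p j) } = ∅ := by
      ext r; simp [Fin.isEmpty]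
    rw [bSpec, hA, hB]
  -- d2 > 0
  set B := { r : ℝ | ∃ j : Fin d2, r = raySup (M j) } with hB
  have hBrange : B = Set.range fun j => raySup (M j) := by
    ext r; simp [hB, Set.mem_range, eq_comm]
  have hBfin : B.Finite := hBrange ▸ Set.finite_range _
  have hBne : B.Nonempty := ⟨raySup (M ⟨0, h2⟩), ⟨⟨0, h2⟩, rfl⟩⟩
  have hBbdd : BddAbove B := hBfin.bddAbove
  have hjle : ∀ j, raySup (M j) ≤ sSup B := fun j => le_csSup hBbdd ⟨j, rfl⟩
  obtain ⟨j0, hj0⟩ : ∃ j0, sSup B = raySup (M j0) := hBne.csSup_mem hBfin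
  rcases Nat.eq_zero_or_pos d1 with h1 | h1
  · subst h1
    have hray0 : ∀ j : Fin d2, raySup (M j) = 0 := by
      intro j
      have : {r : ℝ | ∃ s : Fin 0 → ℝ, (∑ i, s i ^ 2 = 1) ∧
          r = |∑ i, ∑ p, M j i p * s i * s p|} = ∅ := by
        ext r; simp
      rw [raySup, this, Real.sSup_empty]
    have hA : { r : ℝ | ∃ x : Fin 0 → ℝ, ∃ y : Fin d2 → ℝ,
        (∑ i, x i ^ 2 = 1) ∧ (∑ j, y j ^ 2 = 1) ∧ r = |bform T x y| } = ∅ := by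
      ext r; simp
    rw [bSpec, hA, Real.sSup_empty, hj0, hray0]
  -- d1 > 0, d2 > 0: the main case
  have hQle : ∀ (j : Fin d2) (x : Fin d1 → ℝ), (∑ i, x i ^ 2 = 1) → |Q j x| ≤ raySup (M j) := by
    intro j x hx
    exact le_csSup (aux_bddR (M j)) ⟨x, hx, rfl⟩
  have hAbdd := aux_bddA T
  -- nonnegativity of sSup B
  have hBSnn : 0 ≤ sSup B := by
    refine le_trans ?_ (hjle ⟨0, h2⟩)
    refine le_trans (abs_nonneg (Q ⟨0, h2⟩ (Pi.single ⟨0, h1⟩ 1))) ?_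
    exact hQle _ _ (aux_single_unit _)
  have hbnn : 0 ≤ bSpec T := by
    refine le_trans (abs_nonneg (bform T (Pi.single ⟨0, h1⟩ 1) (Pi.single ⟨0, h2⟩ 1))) ?_
    exact le_csSup hAbdd ⟨_, _, aux_single_unit _, aux_single_unit _, rfl⟩
  apply le_antisymm
  · -- bSpec ≤ sSup B
    apply Real.sSup_le _ hBSnn
    rintro r ⟨x, y, hx, hy, rfl⟩
    rw [aux_decomp T hdiag x y]
    calc |∑ j, y j ^ 2 * Q j x| ≤ ∑ j, |y j ^ 2 * Q j x| := Finset.abs_sum_le_sum_abs _ _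
      _ = ∑ j, y j ^ 2 * |Q j x| := by
          refine Finset.sum_congr rfl fun j _ => ?_
          rw [abs_mul, abs_of_nonneg (sq_nonneg _)]
      _ ≤ ∑ j, y j ^ 2 * sSup B := by
          refine Finset.sum_le_sum fun j _ => ?_
          exact mul_le_mul_of_nonneg_left ((hQle j x hx).trans (hjle j)) (sq_nonneg _)
      _ = sSup B := by rw [← Finset.sum_mul, hy, one_mul]
  · -- sSup B ≤ bSpec
    rw [hj0]
    apply Real.sSup_le _ hbnn
    rintro r ⟨s, hs, rfl⟩
    apply le_csSup hAbdd
    refine ⟨s, Pi.single j0 1, hs, aux_single_unit j0, ?_⟩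
    have hbf : bform T s (Pi.single j0 1) = Q j0 s := by
      rw [aux_decomp T hdiag s (Pi.single j0 1), Finset.sum_eq_single j0]
      · simp [hQ, Pi.single_apply]
      · intro j _ hj
        simp [Pi.single_apply, hj]
      · intro h; exact absurd (Finset.mem_univ j0) h
    rw [hbf]
    rfl
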